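/- Let M = [a,b) and N = [c,d) be interval modules (0 ≤ a < b, 0 ≤ c < d) with both S_{M,N} and S_{N,M} nonempty. If min S_{M,N} ≥ min S_{N,M}, then sup S_{M,N} ≥ sup S_{N,M}; that is, the last homomorphism between M and N to be born is also the last to die. -/

import Mathlib

open scoped NNReal

/-- A persistence module: a functor from `[0,∞)` to real vector spaces. -/
structure PM where
  V : ℝ≥0 → Type
  [grp : ∀ x, AddCommGroup (V x)]
  [mod : ∀ x, Module ℝ (V x)]
  map : ∀ {x y : ℝ≥0}, x ≤ y → (V x →ₗ[ℝ] V y)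
  map_id : ∀ x : ℝ≥0, map (le_refl x) = LinearMap.id
  map_comp : ∀ {x y z : ℝ≥0} (h1 : x ≤ y) (h2 : y ≤ z),
    (map h2).comp (map h1) = map (h1.trans h2)

attribute [instance] PM.grp PM.mod

/-- A morphism of persistence modules. -/
structure PM.Hom (M N : PM) where
  app : ∀ x : ℝ≥0, M.V x →ₗ[ℝ] N.V x
  comm : ∀ {x y : ℝ≥0} (h : x ≤ y), (app y).comp (M.map h) = (N.map h).comp (app x)

/-- The shifted module `M·ε`. -/
def PM.shift (M : PM) (ε : ℝ≥0) : PM where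
  V x := M.V (x + ε)
  grp x := inferInstance
  mod x := inferInstance
  map h := M.map (add_le_add h le_rfl)
  map_id x := M.map_id (x + ε)
  map_comp h1 h2 := M.map_comp _ _

noncomputable def intervalSub (α β : ℝ) (x : ℝ≥0) : Submodule ℝ ℝ :=
  if α ≤ (x : ℝ) ∧ (x : ℝ) < β then ⊤ else ⊥

/-- The interval module `[α,β)`. -/
noncomputable def intervalModule (α β : ℝ) : PM where
  V x := ↥(intervalSub α β x)
  grp x := inferInstance
  mod x := inferInstance
  map {x y} h := LinearMap.codRestrict _
      ((if α ≤ (x : ℝ) ∧ (y : ℝ) < β then (1 : ℝ) else 0) • (intervalSub α β x).subtype)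
      (by
        intro v
        by_cases hy : α ≤ (y : ℝ) ∧ (y : ℝ) < β
        · simp [intervalSub, hy]
        · have hc : ¬(α ≤ (x : ℝ) ∧ (y : ℝ) < β) := by
            intro hc
            exact hy ⟨le_trans hc.1 (by exact_mod_cast h), hc.2⟩
          simp only [if_neg hc, zero_smul, LinearMap.zero_apply]
          exact Submodule.zero_mem _)
  map_id x := by
    ext v
    by_cases hx : α ≤ (x : ℝ) ∧ (x : ℝ) < β
    · simp [hx]
    · have hv : (v : ℝ) = 0 := by
        have h2 := v.2
        simp only [intervalSub, if_neg hx, Submodule.mem_bot] at h2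
        exact h2
      simp [hx, hv]
  map_comp {x y z} h1 h2 := by
    ext v
    by_cases hC : α ≤ (x : ℝ) ∧ (z : ℝ) < β
    · have hA : α ≤ (x : ℝ) ∧ (y : ℝ) < β :=
        ⟨hC.1, lt_of_le_of_lt (by exact_mod_cast h2) hC.2⟩
      have hB : α ≤ (y : ℝ) ∧ (z : ℝ) < β :=
        ⟨le_trans hC.1 (by exact_mod_cast h1), hC.2⟩
      simp [hA, hB, hC]
    · rcases not_and_or.mp hC with hx | hz
      · have hA : ¬(α ≤ (x : ℝ) ∧ (y : ℝ) < β) := fun h => hx h.1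
        simp [hA, hC]
        split_ifs <;> simp
      · have hB : ¬(α ≤ (y : ℝ) ∧ (z : ℝ) < β) := fun h => hz h.2
        simp [hB, hC]

/-- `Hom(M,N) ≠ {0}`: there is a nonzero morphism from `M` to `N`. -/
def HomNeZero (M N : PM) : Prop := ∃ F : PM.Hom M N, ∃ x, F.app x ≠ 0

/-- `S_{M,N} = {x ≥ 0 : Hom(M, N·x) ≠ {0}}`. -/
noncomputable def Sset (M N : PM) : Set ℝ :=
  {x : ℝ | 0 ≤ x ∧ HomNeZero M (N.shift x.toNNReal)}

/-- The canonical morphism `Π_M^{M·τ} : M → M·τ`. -/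
def PM.pi (M : PM) (τ : ℝ≥0) : M.Hom (M.shift τ) where
  app x := M.map le_self_add
  comm {x y} h := by
    show (M.map le_self_add).comp (M.map h) =
      (M.map (add_le_add h le_rfl)).comp (M.map le_self_add)
    rw [M.map_comp, M.map_comp]

/-- The pair `(Φ, Ψ)` is an `ε`-interleaving between `M` and `N`:
`(Ψ·ε) ∘ Φ = Π_M^{M·2ε}` and `(Φ·ε) ∘ Ψ = Π_N^{N·2ε}` (expressed pointwise). -/
def IsInterleaving (M N : PM) (ε : ℝ≥0)
    (Φ : M.Hom (N.shift ε)) (Ψ : N.Hom (M.shift ε)) : Prop :=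
  (∀ x : ℝ≥0, (Ψ.app (x + ε)).comp (Φ.app x) =
      M.map (le_self_add.trans le_self_add : x ≤ x + ε + ε)) ∧
  (∀ x : ℝ≥0, (Φ.app (x + ε)).comp (Ψ.app x) =
      N.map (le_self_add.trans le_self_add : x ≤ x + ε + ε))

lemma intervalSub_coe_zero {α β : ℝ} {x : ℝ≥0} (h : ¬(α ≤ (x:ℝ) ∧ (x:ℝ) < β))
    (v : ↥(intervalSub α β x)) : (v : ℝ) = 0 := by
  have h2 := v.2
  simpa [intervalSub, h] using h2

lemma intervalSub_cond {α β : ℝ} {x : ℝ≥0} (v : ↥(intervalSub α β x)) (hv : (v:ℝ) ≠ 0) :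
    α ≤ (x:ℝ) ∧ (x:ℝ) < β := by
  by_contra h
  exact hv (intervalSub_coe_zero h v)

lemma intervalModule_map_coe (α β : ℝ) {x y : ℝ≥0} (h : x ≤ y) (v : ↥(intervalSub α β x)) :
    Subtype.val ((intervalModule α β).map h v : ↥(intervalSub α β y))
      = (if α ≤ (x:ℝ) ∧ (y:ℝ) < β then (1:ℝ) else 0) * (v : ℝ) := rfl

noncomputable def diagApp (a b c d : ℝ) (t : ℝ≥0) (s : ℝ≥0) :
    ↥(intervalSub a b s) →ₗ[ℝ] ↥(intervalSub c d (s + t)) :=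
  LinearMap.codRestrict (intervalSub c d (s + t))
    ((if c ≤ ((s + t : ℝ≥0) : ℝ) ∧ ((s + t : ℝ≥0) : ℝ) < d then (1:ℝ) else 0) •
      (intervalSub a b s).subtype)
    (by
      intro v
      by_cases h : c ≤ ((s + t : ℝ≥0) : ℝ) ∧ ((s + t : ℝ≥0) : ℝ) < d
      · have ht : intervalSub c d (s + t) = ⊤ := if_pos h
        rw [ht]
        exact Submodule.mem_top
      · simp only [if_neg h, zero_smul, LinearMap.zero_apply]
        exact Submodule.zero_mem _)

lemma diagApp_coe (a b c d : ℝ) (t : ℝ≥0) (s : ℝ≥0) (v : ↥(intervalSub a b s)) :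
    Subtype.val (diagApp a b c d t s v)
      = (if c ≤ ((s + t : ℝ≥0) : ℝ) ∧ ((s + t : ℝ≥0) : ℝ) < d then (1:ℝ) else 0) * (v : ℝ) := rfl

lemma diag_comm (a b c d : ℝ) (t : ℝ≥0) (hca : c ≤ a + t) (hdb : d ≤ b + t)
    {p q : ℝ≥0} (h : p ≤ q) (v : ↥(intervalSub a b p)) :
    diagApp a b c d t q ((intervalModule a b).map h v)
      = (intervalModule c d).map (add_le_add h le_rfl) (diagApp a b c d t p v) := by
  apply Subtype.ext
  erw [diagApp_coe, intervalModule_map_coe, intervalModule_map_coe, diagApp_coe]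
  by_cases hv0 : (v : ℝ) = 0
  · rw [hv0]; ring
  · obtain ⟨hap, hpb⟩ := intervalSub_cond v hv0
    have hpq : (p:ℝ) ≤ q := NNReal.coe_le_coe.mpr h
    simp only [NNReal.coe_add]
    by_cases hqd : (q:ℝ) + t < d
    · have e1 : c ≤ (q:ℝ) + t ∧ (q:ℝ) + t < d := ⟨by linarith, hqd⟩
      have e2 : a ≤ (p:ℝ) ∧ (q:ℝ) < b := ⟨hap, by linarith⟩
      have e3 : c ≤ (p:ℝ) + t ∧ (q:ℝ) + t < d := ⟨by linarith, hqd⟩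
      have e4 : c ≤ (p:ℝ) + t ∧ (p:ℝ) + t < d := ⟨by linarith, by linarith⟩
      simp [e1, e2, e3, e4]
    · simp [hqd]

noncomputable def diagHom (a b c d : ℝ) (t : ℝ≥0) (hca : c ≤ a + t) (hdb : d ≤ b + t) :
    PM.Hom (intervalModule a b) ((intervalModule c d).shift t) where
  app s := diagApp a b c d t s
  comm {p q} h := by
    ext v
    exact diag_comm a b c d t hca hdb h v

lemma Sset_interval (a b c d : ℝ) (ha : 0 ≤ a) (hab : a < b) :
    Sset (intervalModule a b) (intervalModule c d)
      = Set.Ico (max 0 (max (c - a) (d - b))) (d - a) := by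
  have hat : ((a.toNNReal : ℝ≥0) : ℝ) = a := Real.coe_toNNReal a ha
  ext x
  simp only [Sset, Set.mem_setOf_eq, Set.mem_Ico, max_le_iff]
  constructor
  · rintro ⟨hx0, F, s, hFs⟩
    have hxt : ((x.toNNReal : ℝ≥0) : ℝ) = x := Real.coe_toNNReal x hx0
    obtain ⟨v, hv⟩ : ∃ v : ↥(intervalSub a b s), F.app s v ≠ 0 := by
      by_contra h
      push_neg at h
      exact hFs (by ext w; simpa using h w)
    have hvz : (v : ℝ) ≠ 0 := by
      intro h
      exact hv (by rw [show v = 0 from Subtype.ext h]; exact (F.app s).map_zero)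
    obtain ⟨has, hsb⟩ := intervalSub_cond v hvz
    have hFsv : Subtype.val (F.app s v : ↥(intervalSub c d (s + x.toNNReal))) ≠ 0 :=
      fun h => hv (Subtype.ext h)
    have hsc : c ≤ (s:ℝ) + x ∧ (s:ℝ) + x < d := by
      have h2 := intervalSub_cond (F.app s v) hFsv
      rwa [NNReal.coe_add, hxt] at h2
    have hsas : a.toNNReal ≤ s := by
      rw [← NNReal.coe_le_coe, hat]
      exact has
    have hwmem : (1:ℝ) ∈ intervalSub a b a.toNNReal := by
      simp [intervalSub, hat, hab]
    have hcomm := LinearMap.congr_fun (F.comm hsas)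
      (⟨1, hwmem⟩ : ↥(intervalSub a b a.toNNReal))
    replace hcomm : F.app s ((intervalModule a b).map hsas ⟨1, hwmem⟩) = ((intervalModule c d).shift x.toNNReal).map hsas (F.app a.toNNReal ⟨1, hwmem⟩) := hcomm
    have huv : Subtype.val ((intervalModule a b).map hsas ⟨1, hwmem⟩
        : ↥(intervalSub a b s)) = 1 := by
      rw [intervalModule_map_coe, if_pos ⟨le_of_eq hat.symm, hsb⟩, mul_one]
    have hvu : v = (v : ℝ) • ((intervalModule a b).map hsas ⟨1, hwmem⟩) := by
      apply Subtype.ext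
      show (v : ℝ) = Subtype.val ((v:ℝ) • ((intervalModule a b).map hsas ⟨1, hwmem⟩
        : ↥(intervalSub a b s)))
      erw [SetLike.val_smul, smul_eq_mul, huv, mul_one]
    have hfu : F.app s ((intervalModule a b).map hsas ⟨1, hwmem⟩) ≠ 0 := by
      intro h
      apply hv
      rw [hvu, map_smul, h, smul_zero]
    have hfw : F.app a.toNNReal ⟨1, hwmem⟩ ≠ 0 :=
      fun h => hfu (by rw [hcomm, h, map_zero])
    have hfwv : Subtype.val (F.app a.toNNReal ⟨1, hwmem⟩
        : ↥(intervalSub c d (a.toNNReal + x.toNNReal))) ≠ 0 :=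
      fun h => hfw (Subtype.ext h)
    have hac : c ≤ a + x ∧ a + x < d := by
      have h2 := intervalSub_cond _ hfwv
      rwa [NNReal.coe_add, hat, hxt] at h2
    have hdbx : d - b ≤ x := by
      by_contra hbd
      push_neg at hbd
      have hb0 : (0:ℝ) ≤ b := le_of_lt (lt_of_le_of_lt ha hab)
      have hbt : ((b.toNNReal : ℝ≥0) : ℝ) = b := Real.coe_toNNReal b hb0
      have hssb : s ≤ b.toNNReal := by
        rw [← NNReal.coe_le_coe, hbt]
        exact le_of_lt hsb
      have hcomm2 := LinearMap.congr_fun (F.comm hssb) v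
      replace hcomm2 : F.app b.toNNReal ((intervalModule a b).map hssb v) = ((intervalModule c d).shift x.toNNReal).map hssb (F.app s v) := hcomm2
      have hL : (intervalModule a b).map hssb v = 0 := by
        apply Subtype.ext
        show Subtype.val ((intervalModule a b).map hssb v : ↥(intervalSub a b b.toNNReal)) = 0
        rw [intervalModule_map_coe,
          if_neg (show ¬(a ≤ (s:ℝ) ∧ ((b.toNNReal : ℝ≥0):ℝ) < b) from
            fun hh => absurd hh.2 (by rw [hbt]; exact lt_irrefl b)), zero_mul]
      rw [hL, map_zero] at hcomm2
      have heq : (intervalModule c d).map (add_le_add hssb le_rfl) (F.app s v) = 0 :=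
        hcomm2.symm
      have hval := congrArg Subtype.val heq
      erw [intervalModule_map_coe,
        if_pos (show c ≤ ((s + x.toNNReal : ℝ≥0):ℝ) ∧ ((b.toNNReal + x.toNNReal : ℝ≥0):ℝ) < d by
          rw [NNReal.coe_add, NNReal.coe_add, hbt, hxt]
          exact ⟨hsc.1, by linarith⟩), one_mul] at hval
      exact hFsv hval
    exact ⟨⟨hx0, by linarith [hac.1], hdbx⟩, by linarith [hac.2]⟩
  · rintro ⟨⟨hx0, hca, hdb⟩, hda⟩
    refine ⟨hx0, ?_⟩
    have hxt : ((x.toNNReal : ℝ≥0) : ℝ) = x := Real.coe_toNNReal x hx0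
    refine ⟨diagHom a b c d x.toNNReal (by rw [hxt]; linarith) (by rw [hxt]; linarith),
      a.toNNReal, ?_⟩
    intro h0
    have hwmem : (1:ℝ) ∈ intervalSub a b a.toNNReal := by simp [intervalSub, hat, hab]
    have h1 := LinearMap.congr_fun h0 (⟨1, hwmem⟩ : ↥(intervalSub a b a.toNNReal))
    have hval := congrArg Subtype.val h1
    rw [show ((diagHom a b c d x.toNNReal (by rw [hxt]; linarith) (by rw [hxt]; linarith)).app
          a.toNNReal (⟨1, hwmem⟩ : ↥(intervalSub a b a.toNNReal)))
        = diagApp a b c d x.toNNReal a.toNNReal ⟨1, hwmem⟩ from rfl] at hval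
    rw [diagApp_coe,
      if_pos (show c ≤ ((a.toNNReal + x.toNNReal : ℝ≥0):ℝ)
          ∧ ((a.toNNReal + x.toNNReal : ℝ≥0):ℝ) < d by
        rw [NNReal.coe_add, hat, hxt]
        exact ⟨by linarith, by linarith⟩), one_mul] at hval
    exact one_ne_zero (show (1:ℝ) = 0 from hval)
theorem stmt18 (a b c d σ σ' τ τ' : ℝ) (ha : 0 ≤ a) (hab : a < b) (hc : 0 ≤ c) (hcd : c < d)
    (hσ : IsLeast (Sset (intervalModule a b) (intervalModule c d)) σ) (hσ' : IsLUB (Sset (intervalModule a b) (intervalModule c d)) σ')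
    (hτ : IsLeast (Sset (intervalModule c d) (intervalModule a b)) τ) (hτ' : IsLUB (Sset (intervalModule c d) (intervalModule a b)) τ')
    (hmin : σ ≥ τ) :
    σ' ≥ τ' := by
  rw [Sset_interval a b c d ha hab] at hσ hσ'
  rw [Sset_interval c d a b hc hcd] at hτ hτ'
  set lo1 := max 0 (max (c - a) (d - b)) with hlo1
  set lo2 := max 0 (max (a - c) (b - d)) with hlo2
  have h1 : lo1 < d - a := lt_of_le_of_lt hσ.1.1 hσ.1.2
  have h2 : lo2 < b - c := lt_of_le_of_lt hτ.1.1 hτ.1.2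
  have hσeq : σ = lo1 := le_antisymm (hσ.2 (Set.left_mem_Ico.mpr h1)) hσ.1.1
  have hτeq : τ = lo2 := le_antisymm (hτ.2 (Set.left_mem_Ico.mpr h2)) hτ.1.1
  have hσ'eq : σ' = d - a := hσ'.unique (isLUB_Ico h1)
  have hτ'eq : τ' = b - c := hτ'.unique (isLUB_Ico h2)
  rw [hσ'eq, hτ'eq]
  by_contra hcon
  push_neg at hcon
  have l1 : a - c ≤ lo2 := le_max_of_le_right (le_max_left _ _)
  have l2 : b - d ≤ lo2 := le_max_of_le_right (le_max_right _ _)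
  have hpos : 0 < lo2 := by
    rcases lt_or_ge 0 (a - c) with h' | h'
    · linarith
    · rcases lt_or_ge 0 (b - d) with h'' | h''
      · linarith
      · linarith
  have hlt : lo1 < lo2 := max_lt hpos (max_lt (by linarith) (by linarith))
  rw [hσeq, hτeq] at hmin
  linarith
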